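/- arXiv:2308.05333 — 2 statements merged into one kernel-verified Lean document; each statement's English description precedes it below -/
import Mathlib

section
/- Let C be a symmetric real N×N matrix with rank(C) = N−1 whose null space is spanned by the all-ones vector. For any index i, let C' be the matrix obtained from C by setting every entry of the i-th row and of the i-th column to zero. Then rank(C') = N−1 and the null space of C' is spanned by the standard basis vector e_i. -/
open Matrix

/-- Zeroing out the `i`-th row and `i`-th column of a matrix. -/
def zeroRowCol {N : ℕ} (C : Matrix (Fin N) (Fin N) ℝ) (i : Fin N) :
    Matrix (Fin N) (Fin N) ℝ :=
  Matrix.of fun k l => if k = i ∨ l = i then 0 else C k l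

/-- If `C` is a symmetric real `N × N` matrix of rank `N - 1` with null space
spanned by the all-ones vector, then the matrix `C'` obtained by zeroing out the `i`-th row
and column of `C` still has rank `N - 1`, and its null space is spanned by `e_i`. -/
theorem rank_zeroRowCol_and_ker
    {N : ℕ} (hN : 0 < N) (C : Matrix (Fin N) (Fin N) ℝ)
    (hsymm : C.IsSymm) (hrank : C.rank = N - 1)
    (hker : ∀ x : Fin N → ℝ, C.mulVec x = 0 ↔ ∃ c : ℝ, x = c • (fun _ => (1 : ℝ)))
    (i : Fin N) :
    (zeroRowCol C i).rank = N - 1 ∧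
      (∀ x : Fin N → ℝ,
        (zeroRowCol C i).mulVec x = 0 ↔ ∃ c : ℝ, x = c • (Pi.single i 1 : Fin N → ℝ)) := by
  have hC1 : C.mulVec (fun _ => (1 : ℝ)) = 0 := by
    rw [hker]; exact ⟨1, by funext k; simp⟩
  -- column sums vanish
  have hcol : ∀ l, ∑ k, C k l = 0 := by
    intro l
    have h := congrFun hC1 l
    have hsym : ∀ k, C k l = C l k := fun k => by
      have := congrFun (congrFun hsymm k) l
      simpa [Matrix.transpose_apply] using this.symm
    simpa [Matrix.mulVec, dotProduct, hsym] using h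
  have key : ∀ x : Fin N → ℝ,
      (zeroRowCol C i).mulVec x = 0 ↔ ∃ c : ℝ, x = c • (Pi.single i 1 : Fin N → ℝ) := by
    intro x
    constructor
    · intro hx
      set x' : Fin N → ℝ := fun l => if l = i then 0 else x l with hx'def
      have hrow : ∀ k, k ≠ i → C.mulVec x' k = 0 := by
        intro k hk
        have h := congrFun hx k
        have : ∑ l, (if k = i ∨ l = i then (0:ℝ) else C k l) * x l = 0 := by
          simpa [zeroRowCol, Matrix.mulVec, dotProduct] using h
        rw [Matrix.mulVec, dotProduct]
        rw [← this]
        apply Finset.sum_congr rfl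
        intro l _
        by_cases hl : l = i <;> simp [hx'def, hl, hk]
      have hsum : ∑ k, C.mulVec x' k = 0 := by
        simp only [Matrix.mulVec, dotProduct]
        rw [Finset.sum_comm]
        apply Finset.sum_eq_zero
        intro l _
        rw [← Finset.sum_mul, hcol, zero_mul]
      have hi : C.mulVec x' i = 0 := by
        rw [← hsum]
        exact (Finset.sum_eq_single i (fun k _ hk => hrow k hk) (by simp)).symm
      have hCx' : C.mulVec x' = 0 := by
        funext k
        by_cases hk : k = i
        · subst hk; exact hi
        · exact hrow k hk
      obtain ⟨c, hc⟩ := (hker x').mp hCx'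
      have hc0 : c = 0 := by
        have := congrFun hc i
        simpa [hx'def] using this.symm
      refine ⟨x i, ?_⟩
      funext l
      by_cases hl : l = i
      · subst hl; simp
      · have := congrFun hc l
        simp [hx'def, hl, hc0] at this
        simp [hl, this]
    · rintro ⟨c, rfl⟩
      funext k
      simp only [Matrix.mulVec, dotProduct, zeroRowCol, Matrix.of_apply,
        Pi.smul_apply, Pi.single_apply, smul_eq_mul, Pi.zero_apply]
      apply Finset.sum_eq_zero
      intro l _
      by_cases hl : l = i <;> simp [hl]
  refine ⟨?_, key⟩
  -- rank
  have hkerEq : LinearMap.ker (zeroRowCol C i).mulVecLin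
      = Submodule.span ℝ {(Pi.single i 1 : Fin N → ℝ)} := by
    ext x
    rw [LinearMap.mem_ker, Matrix.mulVecLin_apply, key, Submodule.mem_span_singleton]
    constructor
    · rintro ⟨c, rfl⟩; exact ⟨c, rfl⟩
    · rintro ⟨c, rfl⟩; exact ⟨c, rfl⟩
  have hne : (Pi.single i 1 : Fin N → ℝ) ≠ 0 := by
    intro h
    have := congrFun h i
    simp at this
  have hdim : Module.finrank ℝ (LinearMap.ker (zeroRowCol C i).mulVecLin) = 1 := by
    rw [hkerEq, finrank_span_singleton hne]
  have hrn := LinearMap.finrank_range_add_finrank_ker (zeroRowCol C i).mulVecLin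
  rw [hdim] at hrn
  simp only [Module.finrank_pi, Fintype.card_fin] at hrn
  rw [Matrix.rank]
  omega
end

section
/- Let ∇ be a real m×N matrix whose null space is exactly the span of the all-ones vector 1 ∈ ℝ^N, and let A be a symmetric positive definite m×m real matrix; set C = ∇ᵀ A ∇. For any index i, let ℳ be the matrix obtained from C by setting every entry of the i-th row and i-th column to zero and then setting the (i,i) diagonal entry to 1 (the 'masking' of C at i). Then ℳ is a symmetric positive definite matrix. -/
open Matrix

/-- The "masking" of a matrix at index `i`: the `i`-th row and `i`-th column are set to zero
and the `(i,i)` diagonal entry is set to `1`. -/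
def maskMatrix {N : ℕ} (C : Matrix (Fin N) (Fin N) ℝ) (i : Fin N) :
    Matrix (Fin N) (Fin N) ℝ :=
  Matrix.of fun k l =>
    if k = i ∧ l = i then 1 else if k = i ∨ l = i then 0 else C k l

lemma mask_mulVec {N : ℕ} (C : Matrix (Fin N) (Fin N) ℝ) (i : Fin N)
    (x : Fin N → ℝ) (k : Fin N) :
    (maskMatrix C i).mulVec x k =
      if k = i then x i else C.mulVec (Function.update x i 0) k := by
  simp only [mulVec, dotProduct, maskMatrix, Matrix.of_apply]
  by_cases hk : k = i
  · subst hk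
    simp only [if_pos rfl, true_and]
    rw [Finset.sum_eq_single k]
    · simp
    · intro b _ hb; simp [hb]
    · simp
  · simp only [if_neg hk]
    apply Finset.sum_congr rfl
    intro l _
    by_cases hl : l = i
    · subst hl; simp [hk]
    · simp [hk, hl, Function.update_of_ne hl]

/-- Let `∇` be a real `m × N` matrix whose null space is the span of the
all-ones vector and `A` a symmetric positive definite `m × m` matrix; set `C = ∇ᵀ A ∇`.
Then the masking of `C` at any index `i` is symmetric positive definite. -/
theorem maskMatrix_posDef
    {m N : ℕ} (hN : 0 < N)
    (grad : Matrix (Fin m) (Fin N) ℝ)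
    (hker : ∀ x : Fin N → ℝ, grad.mulVec x = 0 ↔ ∃ c : ℝ, x = c • (fun _ => (1 : ℝ)))
    (A : Matrix (Fin m) (Fin m) ℝ) (hA : A.PosDef)
    (i : Fin N) :
    (maskMatrix (gradᵀ * A * grad) i).PosDef := by
  set C := gradᵀ * A * grad with hC
  have hCsymm : C.IsHermitian := by
    have := isHermitian_conjTranspose_mul_mul grad hA.isHermitian
    simpa [hC, conjTranspose_eq_transpose_of_trivial] using this
  rw [posDef_iff_dotProduct_mulVec]
  constructor
  · -- Hermitian
    have hsym : ∀ a b, C a b = C b a := fun a b =>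
      (congrFun (congrFun hCsymm.transpose.eq b) a).symm
    ext k l
    simp only [conjTranspose_apply, maskMatrix, Matrix.of_apply, star_trivial]
    by_cases hk : k = i <;> by_cases hl : l = i <;> simp [hk, hl, hsym l k]
  · intro x hx
    set y := Function.update x i 0 with hy
    -- value of quadratic form
    have hquad : star x ⬝ᵥ (maskMatrix C i) *ᵥ x = x i * x i + y ⬝ᵥ C *ᵥ y := by
      simp only [star_trivial, dotProduct]
      rw [Finset.sum_eq_add_sum_sdiff_singleton_of_mem (Finset.mem_univ i)]
      rw [Finset.sum_eq_add_sum_sdiff_singleton_of_mem (i := i) (Finset.mem_univ i)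
        (fun k => y k * (C *ᵥ y) k)]
      have h1 : x i * ((maskMatrix C i) *ᵥ x) i = x i * x i := by
        rw [mask_mulVec]; simp
      have h2 : y i * (C *ᵥ y) i = 0 := by simp [hy]
      rw [h1, h2]
      ring_nf
      congr 1
      apply Finset.sum_congr rfl
      intro k hk
      simp only [Finset.mem_sdiff, Finset.mem_singleton] at hk
      rw [mask_mulVec, if_neg hk.2, hy, Function.update_of_ne hk.2]
    rw [hquad]
    have hyquad : y ⬝ᵥ C *ᵥ y = star (grad *ᵥ y) ⬝ᵥ A *ᵥ (grad *ᵥ y) := by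
      rw [hC, ← mulVec_mulVec, ← mulVec_mulVec, dotProduct_mulVec, vecMul_transpose,
        star_trivial]
    by_cases hy0 : y = 0
    · have hxi : x i ≠ 0 := by
        intro h
        apply hx
        funext k
        by_cases hk : k = i
        · subst hk; exact h
        · have := congrFun hy0 k
          rwa [hy, Function.update_of_ne hk] at this
      have : y ⬝ᵥ C *ᵥ y = 0 := by simp [hy0]
      rw [this, add_zero]
      exact mul_self_pos.mpr hxi
    · have hgy : grad *ᵥ y ≠ 0 := by
        intro h
        obtain ⟨c, hc⟩ := (hker y).mp h
        have : y i = c := by rw [hc]; simp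
        rw [hy] at this; simp at this
        apply hy0
        rw [hc, ← this]
        simp
      have h2 : 0 < y ⬝ᵥ C *ᵥ y := by
        rw [hyquad]; exact hA.dotProduct_mulVec_pos hgy
      nlinarith [sq_nonneg (x i)]
end
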